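/- arXiv:2510.20140 — 3 statements merged into one kernel-verified Lean document; each statement's English description precedes it below -/
import Mathlib

section
/- Let K ≥ 1 and n ≥ 1. Let R_c^1, …, R_c^K and R_r be n×n complex positive semidefinite Hermitian matrices, let h^1, …, h^K ∈ ℂ^n, and let σ² > 0. Define the reassigned matrices R̃_c^k = R_c^k + (1/K)·R_r for each k, and the SINR ratios γ_k = (h^k)^H R_c^k h^k / ( Σ_{j≠k} (h^k)^H R_c^j h^k + (h^k)^H R_r h^k + σ² ) and γ̃_k = (h^k)^H R̃_c^k h^k / ( Σ_{j≠k} (h^k)^H R̃_c^j h^k + σ² ). Then: (i) each R̃_c^k is positive semidefinite; (ii) Σ_{k=1}^K R̃_c^k = Σ_{k=1}^K R_c^k + R_r (so the total transmit covariance is unchanged); and (iii) γ̃_k ≥ γ_k for every k, with strict inequality γ̃_k > γ_k whenever (h^k)^H R_r h^k > 0. -/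
open Matrix Finset ComplexOrder

/-- Lemma 1 key step: absorbing the radar covariance equally into the users'
communication covariance matrices preserves PSD-ness and the total transmit
covariance, and does not decrease (generically strictly increases) each SINR. -/
theorem stmt_0 (K n : ℕ) (hK : 1 ≤ K) (hn : 1 ≤ n)
    (Rc : Fin K → Matrix (Fin n) (Fin n) ℂ) (Rr : Matrix (Fin n) (Fin n) ℂ)
    (hRc : ∀ k, (Rc k).PosSemidef) (hRr : Rr.PosSemidef)
    (h : Fin K → (Fin n → ℂ)) (σ2 : ℝ) (hσ : 0 < σ2)
    (Rtc : Fin K → Matrix (Fin n) (Fin n) ℂ)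
    (hRtc : ∀ k, Rtc k = Rc k + ((K : ℂ))⁻¹ • Rr)
    (γ γt : Fin K → ℝ)
    (hγ : ∀ k, γ k = (star (h k) ⬝ᵥ (Rc k *ᵥ h k)).re /
      ((∑ j ∈ univ.erase k, (star (h k) ⬝ᵥ (Rc j *ᵥ h k)).re)
        + (star (h k) ⬝ᵥ (Rr *ᵥ h k)).re + σ2))
    (hγt : ∀ k, γt k = (star (h k) ⬝ᵥ (Rtc k *ᵥ h k)).re /
      ((∑ j ∈ univ.erase k, (star (h k) ⬝ᵥ (Rtc j *ᵥ h k)).re) + σ2)) :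
    (∀ k, (Rtc k).PosSemidef) ∧
    ((∑ k, Rtc k) = (∑ k, Rc k) + Rr) ∧
    (∀ k, γ k ≤ γt k ∧ (0 < (star (h k) ⬝ᵥ (Rr *ᵥ h k)).re → γ k < γt k)) := by
  have hK0 : (0:ℝ) < K := by exact_mod_cast hK
  have hKc : (0:ℂ) ≤ ((K:ℂ))⁻¹ := by
    rw [show ((K:ℂ))⁻¹ = (((K:ℝ)⁻¹ : ℝ) : ℂ) by push_cast; ring]
    rw [Complex.zero_le_real]
    positivity
  -- PSD of Rtc
  have hPSD : ∀ k, (Rtc k).PosSemidef := by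
    intro k
    rw [hRtc k]
    refine ((hRc k).add (.of_dotProduct_mulVec_nonneg ?_ ?_))
    · unfold Matrix.IsHermitian
      rw [conjTranspose_smul, hRr.1.eq]
      congr 1
      simp
    · intro x
      rw [smul_mulVec, dotProduct_smul]
      exact mul_nonneg hKc (hRr.dotProduct_mulVec_nonneg x)
  refine ⟨hPSD, ?_, ?_⟩
  · -- sum
    have hKne : (K:ℂ) ≠ 0 := by exact_mod_cast (by omega : K ≠ 0)
    simp only [hRtc]
    rw [Finset.sum_add_distrib, Finset.sum_const, card_univ, Fintype.card_fin,
      ← Nat.cast_smul_eq_nsmul ℂ, smul_smul, mul_inv_cancel₀ hKne, one_smul]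
  · intro k
    -- real quantities
    set a : Fin K → ℝ := fun j => (star (h k) ⬝ᵥ (Rc j *ᵥ h k)).re with ha
    set r : ℝ := (star (h k) ⬝ᵥ (Rr *ᵥ h k)).re with hr
    have hre : ∀ j, (star (h k) ⬝ᵥ (Rtc j *ᵥ h k)).re = a j + r / K := by
      intro j
      rw [hRtc j, add_mulVec, dotProduct_add, smul_mulVec, dotProduct_smul,
        Complex.add_re, smul_eq_mul,
        show ((K:ℂ))⁻¹ = (((K:ℝ)⁻¹ : ℝ) : ℂ) by push_cast; ring,
        Complex.re_ofReal_mul]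
      simp only [ha, hr]
      ring
    have haj : ∀ j, 0 ≤ a j := fun j => by
      have := (hRc j).dotProduct_mulVec_nonneg (h k); exact_mod_cast (Complex.le_def.mp this).1
    have hrnn : 0 ≤ r := by
      have := hRr.dotProduct_mulVec_nonneg (h k); exact_mod_cast (Complex.le_def.mp this).1
    have hS : 0 ≤ ∑ j ∈ univ.erase k, a j := Finset.sum_nonneg fun j _ => haj j
    set S := ∑ j ∈ univ.erase k, a j with hSdef
    have hcard : ((univ.erase k).card : ℝ) = K - 1 := by
      rw [Finset.card_erase_of_mem (mem_univ k), card_univ, Fintype.card_fin]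
      push_cast [Nat.cast_sub hK]
      ring
    have hγtk : γt k = (a k + r / K) / (S + (K - 1) * (r / K) + σ2) := by
      rw [hγt k]
      congr 1
      · exact hre k
      · rw [Finset.sum_congr rfl fun j _ => hre j, Finset.sum_add_distrib,
          Finset.sum_const, nsmul_eq_mul, hcard]
    have hγk : γ k = a k / (S + r + σ2) := hγ k
    have hd1 : 0 < S + r + σ2 := by linarith
    have hd2 : 0 < S + (K - 1) * (r / K) + σ2 := by
      have : 0 ≤ (K - 1) * (r / K) := by
        apply mul_nonneg (by linarith [hK0, (by exact_mod_cast hK : (1:ℝ) ≤ K)])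
        positivity
      linarith
    have key : (a k + r / K) * (S + r + σ2) - a k * (S + (K - 1) * (r / K) + σ2)
        = (r / K) * (a k + S + r + σ2) := by field_simp; ring
    constructor
    · rw [hγk, hγtk, div_le_div_iff₀ hd1 hd2]
      have := mul_nonneg (by positivity : (0:ℝ) ≤ r / K)
        (by linarith [haj k] : 0 ≤ a k + S + r + σ2)
      linarith [key]
    · intro hrpos
      rw [hγk, hγtk, div_lt_div_iff₀ hd1 hd2]
      have hrK : 0 < r / K := by positivity
      have := mul_pos hrK (by linarith [haj k] : 0 < a k + S + r + σ2)
      linarith [key]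
end

section
/- Let K ≥ 1 and n ≥ 1. Let R_c^1, …, R_c^K and R_r be n×n complex positive semidefinite Hermitian matrices, let h^1, …, h^K ∈ ℂ^n, and let σ² > 0. Define R̃_c^k = R_c^k + (1/K)·R_r, γ_k = (h^k)^H R_c^k h^k / ( Σ_{j≠k} (h^k)^H R_c^j h^k + (h^k)^H R_r h^k + σ² ), and γ̃_k = (h^k)^H R̃_c^k h^k / ( Σ_{j≠k} (h^k)^H R̃_c^j h^k + σ² ). Then the sum rate satisfies Σ_{k=1}^K log₂(1 + γ̃_k) ≥ Σ_{k=1}^K log₂(1 + γ_k), with strict inequality if (h^k)^H R_r h^k > 0 for some k. -/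
open Matrix Finset ComplexOrder

lemma key_frac (a S r σ2 Kr : ℝ) (ha : 0 ≤ a) (hS : 0 ≤ S) (hr : 0 ≤ r)
    (hσ : 0 < σ2) (hKr : 1 ≤ Kr) :
    a / (S + r + σ2) ≤ (a + Kr⁻¹ * r) / (S + (Kr - 1) * Kr⁻¹ * r + σ2) ∧
    (0 < r → a / (S + r + σ2) < (a + Kr⁻¹ * r) / (S + (Kr - 1) * Kr⁻¹ * r + σ2)) := by
  have hKpos : 0 < Kr := lt_of_lt_of_le one_pos hKr
  have hKi : 0 < Kr⁻¹ := inv_pos.mpr hKpos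
  have hKK : Kr * Kr⁻¹ = 1 := mul_inv_cancel₀ (ne_of_gt hKpos)
  have hD : 0 < S + r + σ2 := by linarith
  have hDt : 0 < S + (Kr - 1) * Kr⁻¹ * r + σ2 := by
    nlinarith [mul_nonneg (mul_nonneg (by linarith : (0:ℝ) ≤ Kr - 1) hKi.le) hr]
  constructor
  · rw [div_le_div_iff₀ hD hDt]
    nlinarith [mul_nonneg (mul_nonneg hKi.le hr) hS, mul_nonneg (mul_nonneg hKi.le hr) hr,
      mul_nonneg (mul_nonneg hKi.le hr) hσ.le, mul_nonneg (mul_nonneg hKi.le hr) ha]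
  · intro hrpos
    rw [div_lt_div_iff₀ hD hDt]
    nlinarith [mul_nonneg (mul_nonneg hKi.le hr) hS, mul_pos (mul_pos hKi hrpos) hrpos,
      mul_pos (mul_pos hKi hrpos) hσ, mul_nonneg (mul_nonneg hKi.le hr) ha]

/-- Lemma 1 applied to the sum rate: absorbing the radar covariance equally into
the users' communication covariance matrices does not decrease the sum rate,
strictly increasing it if some user receives positive radar power. -/
theorem stmt_1 (K n : ℕ) (hK : 1 ≤ K) (hn : 1 ≤ n)
    (Rc : Fin K → Matrix (Fin n) (Fin n) ℂ) (Rr : Matrix (Fin n) (Fin n) ℂ)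
    (hRc : ∀ k, (Rc k).PosSemidef) (hRr : Rr.PosSemidef)
    (h : Fin K → (Fin n → ℂ)) (σ2 : ℝ) (hσ : 0 < σ2)
    (Rtc : Fin K → Matrix (Fin n) (Fin n) ℂ)
    (hRtc : ∀ k, Rtc k = Rc k + ((K : ℂ))⁻¹ • Rr)
    (γ γt : Fin K → ℝ)
    (hγ : ∀ k, γ k = (star (h k) ⬝ᵥ (Rc k *ᵥ h k)).re /
      ((∑ j ∈ univ.erase k, (star (h k) ⬝ᵥ (Rc j *ᵥ h k)).re)
        + (star (h k) ⬝ᵥ (Rr *ᵥ h k)).re + σ2))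
    (hγt : ∀ k, γt k = (star (h k) ⬝ᵥ (Rtc k *ᵥ h k)).re /
      ((∑ j ∈ univ.erase k, (star (h k) ⬝ᵥ (Rtc j *ᵥ h k)).re) + σ2)) :
    (∑ k, Real.logb 2 (1 + γ k)) ≤ (∑ k, Real.logb 2 (1 + γt k)) ∧
    ((∃ k, 0 < (star (h k) ⬝ᵥ (Rr *ᵥ h k)).re) →
      (∑ k, Real.logb 2 (1 + γ k)) < (∑ k, Real.logb 2 (1 + γt k))) := by
  have hKR : (1:ℝ) ≤ (K:ℝ) := by exact_mod_cast hK
  -- rewrite the tilde quadratic forms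
  have hquad : ∀ k j, (star (h k) ⬝ᵥ (Rtc j *ᵥ h k)).re
      = (star (h k) ⬝ᵥ (Rc j *ᵥ h k)).re + (K:ℝ)⁻¹ * (star (h k) ⬝ᵥ (Rr *ᵥ h k)).re := by
    intro k j
    rw [hRtc j, add_mulVec, smul_mulVec, dotProduct_add, dotProduct_smul,
      smul_eq_mul, Complex.add_re]
    congr 1
    have : ((K:ℂ))⁻¹ = (((K:ℝ)⁻¹ : ℝ) : ℂ) := by push_cast; ring
    rw [this, Complex.re_ofReal_mul]
  -- key per-index facts
  have hγnonneg : ∀ k, 0 ≤ γ k := by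
    intro k
    rw [hγ k]
    apply div_nonneg ((hRc k).re_dotProduct_nonneg _)
    have hS : 0 ≤ ∑ j ∈ univ.erase k, (star (h k) ⬝ᵥ (Rc j *ᵥ h k)).re :=
      Finset.sum_nonneg fun j _ => (hRc j).re_dotProduct_nonneg _
    have hrr : 0 ≤ (star (h k) ⬝ᵥ (Rr *ᵥ h k)).re := hRr.re_dotProduct_nonneg _
    linarith
  have hkey : ∀ k, γ k ≤ γt k ∧ (0 < (star (h k) ⬝ᵥ (Rr *ᵥ h k)).re → γ k < γt k) := by
    intro k
    set a := (star (h k) ⬝ᵥ (Rc k *ᵥ h k)).re with ha_def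
    set r := (star (h k) ⬝ᵥ (Rr *ᵥ h k)).re with hr_def
    set S := ∑ j ∈ univ.erase k, (star (h k) ⬝ᵥ (Rc j *ᵥ h k)).re with hS_def
    have hsum : ∑ j ∈ univ.erase k, (star (h k) ⬝ᵥ (Rtc j *ᵥ h k)).re
        = S + ((K:ℝ) - 1) * ((K:ℝ)⁻¹ * r) := by
      rw [Finset.sum_congr rfl fun j _ => hquad k j, Finset.sum_add_distrib,
        Finset.sum_const, Finset.card_erase_of_mem (mem_univ k), Finset.card_univ,
        Fintype.card_fin, nsmul_eq_mul, Nat.cast_sub hK, Nat.cast_one]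
    have hγt' : γt k = (a + (K:ℝ)⁻¹ * r) / (S + ((K:ℝ) - 1) * (K:ℝ)⁻¹ * r + σ2) := by
      rw [hγt k, hquad k k, hsum, mul_assoc]
    have ha : 0 ≤ a := (hRc k).re_dotProduct_nonneg _
    have hr : 0 ≤ r := hRr.re_dotProduct_nonneg _
    have hS : 0 ≤ S := Finset.sum_nonneg fun j _ => (hRc j).re_dotProduct_nonneg _
    have := key_frac a S r σ2 (K:ℝ) ha hS hr hσ hKR
    rw [hγ k, hγt']
    exact this
  have hle : ∀ k ∈ (univ : Finset (Fin K)), Real.logb 2 (1 + γ k) ≤ Real.logb 2 (1 + γt k) := by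
    intro k _
    exact Real.logb_le_logb_of_le (by norm_num : (1:ℝ) < 2)
      (by linarith [hγnonneg k]) (by linarith [(hkey k).1])
  refine ⟨Finset.sum_le_sum hle, ?_⟩
  rintro ⟨k, hk⟩
  refine Finset.sum_lt_sum hle ⟨k, mem_univ k, ?_⟩
  exact Real.logb_lt_logb (by norm_num : (1:ℝ) < 2)
    (by linarith [hγnonneg k]) (by linarith [(hkey k).2 hk])
end

section
/- Let R̃ be an n×n complex Hermitian matrix with eigenvalues λ̃_1 ≤ λ̃_2 ≤ … ≤ λ̃_n listed in increasing order with multiplicity, and let ṽ_1, …, ṽ_m ∈ ℂ^n be orthonormal eigenvectors of R̃ associated with its m smallest eigenvalues λ̃_1, …, λ̃_m (where 1 ≤ m ≤ n). Let R be an n×n complex positive semidefinite Hermitian matrix satisfying the linearized constraint Σ_{i=1}^m ( λ̃_i + ṽ_i^H (R − R̃) ṽ_i ) ≤ 0. Then the sum of the m smallest eigenvalues of R equals 0, and rank(R) ≤ n − m. -/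
open Matrix Finset ComplexOrder

/-- Validity of the SCA constraint (32a): if a PSD matrix `R` satisfies the
linearized constraint `∑ᵢ (λ̃ᵢ + ṽᵢᴴ (R - R̃) ṽᵢ) ≤ 0` built from the `m`
smallest eigenvalues/eigenvectors of a Hermitian matrix `R̃`, then the `m`
smallest eigenvalues of `R` sum to zero and `rank R ≤ n - m`. -/
theorem stmt_10 (n m : ℕ) (hm : 1 ≤ m) (hmn : m ≤ n)
    (Rt : Matrix (Fin n) (Fin n) ℂ) (hRt : Rt.IsHermitian)
    (lamT : Fin n → ℝ) (hTmono : Monotone lamT)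
    (hTperm : ∃ σ : Equiv.Perm (Fin n), lamT = hRt.eigenvalues ∘ σ)
    (v : Fin m → (Fin n → ℂ))
    (hON : ∀ i j, star (v i) ⬝ᵥ v j = if i = j then 1 else 0)
    (hEig : ∀ i, Rt *ᵥ v i = (lamT (Fin.castLE hmn i) : ℂ) • v i)
    (R : Matrix (Fin n) (Fin n) ℂ) (hR : R.PosSemidef)
    (lam : Fin n → ℝ) (hmono : Monotone lam)
    (hperm : ∃ σ : Equiv.Perm (Fin n), lam = hR.isHermitian.eigenvalues ∘ σ)
    (hconstraint : ∑ i : Fin m,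
        (lamT (Fin.castLE hmn i) + (star (v i) ⬝ᵥ ((R - Rt) *ᵥ v i)).re) ≤ 0) :
    (∑ i : Fin m, lam (Fin.castLE hmn i) = 0) ∧ R.rank ≤ n - m := by
  obtain ⟨σ, hσ⟩ := hperm
  -- quadratic form of Rt
  have hquad : ∀ i : Fin m, star (v i) ⬝ᵥ (Rt *ᵥ v i) = (lamT (Fin.castLE hmn i) : ℂ) := by
    intro i
    rw [hEig i, dotProduct_smul, hON i i, if_pos rfl, smul_eq_mul, mul_one]
  have hnonneg : ∀ i : Fin m, (0:ℂ) ≤ star (v i) ⬝ᵥ (R *ᵥ v i) := fun i => hR.dotProduct_mulVec_nonneg (v i)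
  have hre : ∀ i : Fin m, (star (v i) ⬝ᵥ ((R - Rt) *ᵥ v i)).re
      = (star (v i) ⬝ᵥ (R *ᵥ v i)).re - lamT (Fin.castLE hmn i) := by
    intro i
    rw [sub_mulVec, dotProduct_sub, hquad i]
    simp
  have hsum : ∑ i : Fin m, (star (v i) ⬝ᵥ (R *ᵥ v i)).re ≤ 0 := by
    calc ∑ i : Fin m, (star (v i) ⬝ᵥ (R *ᵥ v i)).re
        = ∑ i : Fin m, (lamT (Fin.castLE hmn i) + (star (v i) ⬝ᵥ ((R - Rt) *ᵥ v i)).re) := by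
          refine Finset.sum_congr rfl fun i _ => ?_
          rw [hre i]; ring
      _ ≤ 0 := hconstraint
  have hge : ∀ i ∈ (univ : Finset (Fin m)), (0:ℝ) ≤ (star (v i) ⬝ᵥ (R *ᵥ v i)).re :=
    fun i _ => (Complex.le_def.mp (hnonneg i)).1
  have hall : ∀ i ∈ (univ : Finset (Fin m)), (star (v i) ⬝ᵥ (R *ᵥ v i)).re = 0 := by
    rw [← Finset.sum_eq_zero_iff_of_nonneg hge]
    exact le_antisymm hsum (Finset.sum_nonneg hge)
  have hker : ∀ i, R *ᵥ v i = 0 := by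
    intro i
    refine (hR.dotProduct_mulVec_zero_iff (v i)).mp ?_
    have h1 := hall i (mem_univ i)
    have h2 := (Complex.le_def.mp (hnonneg i)).2
    apply Complex.ext <;> simp_all
  -- linear independence
  have hli : LinearIndependent ℂ v := by
    rw [Fintype.linearIndependent_iff]
    intro g hg j
    have h := congrArg (fun w => star (v j) ⬝ᵥ w) hg
    simp only [dotProduct_zero] at h
    have key : star (v j) ⬝ᵥ (∑ i : Fin m, g i • v i) = g j := by
      have h1 : star (v j) ⬝ᵥ (∑ i : Fin m, g i • v i)
          = ∑ i : Fin m, g i * (star (v j) ⬝ᵥ v i) := by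
        simp only [dotProduct, Finset.sum_apply, Pi.smul_apply, smul_eq_mul,
          Finset.mul_sum]
        rw [Finset.sum_comm]
        refine Finset.sum_congr rfl fun i _ => Finset.sum_congr rfl fun k _ => by ring
      rw [h1]
      simp [hON]
    rw [key] at h
    exact h
  -- rank bound
  have hspan : Submodule.span ℂ (Set.range v) ≤ LinearMap.ker R.mulVecLin := by
    rw [Submodule.span_le]
    rintro _ ⟨i, rfl⟩
    exact hker i
  have hm' : m ≤ Module.finrank ℂ (LinearMap.ker R.mulVecLin) := by
    have h1 : Module.finrank ℂ (Submodule.span ℂ (Set.range v)) = m := by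
      rw [finrank_span_eq_card hli, Fintype.card_fin]
    calc m = Module.finrank ℂ (Submodule.span ℂ (Set.range v)) := h1.symm
      _ ≤ _ := Submodule.finrank_mono hspan
  have hrn := LinearMap.finrank_range_add_finrank_ker R.mulVecLin
  have hdim : Module.finrank ℂ (Fin n → ℂ) = n := by simp
  have hrank : R.rank ≤ n - m := by
    rw [Matrix.rank]
    omega
  refine ⟨?_, hrank⟩
  -- count zero eigenvalues
  have hcard : R.rank = Fintype.card {i // hR.isHermitian.eigenvalues i ≠ 0} :=
    hR.isHermitian.rank_eq_card_non_zero_eigs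
  have hcompl : Fintype.card {i // ¬ hR.isHermitian.eigenvalues i ≠ 0}
      = n - Fintype.card {i // hR.isHermitian.eigenvalues i ≠ 0} := by
    rw [Fintype.card_subtype_compl, Fintype.card_fin]
  have hle : Fintype.card {i // hR.isHermitian.eigenvalues i ≠ 0} ≤ n := by
    simpa using Fintype.card_subtype_le _
  have hZeig : m ≤ Fintype.card {i : Fin n // hR.isHermitian.eigenvalues i = 0} := by
    have : Fintype.card {i : Fin n // hR.isHermitian.eigenvalues i = 0}
        = Fintype.card {i // ¬ hR.isHermitian.eigenvalues i ≠ 0} := by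
      apply Fintype.card_congr
      exact Equiv.subtypeEquivRight (by simp)
    omega
  have hZlam : m ≤ Fintype.card {i : Fin n // lam i = 0} := by
    have : Fintype.card {i : Fin n // lam i = 0}
        = Fintype.card {i : Fin n // hR.isHermitian.eigenvalues i = 0} := by
      apply Fintype.card_congr
      exact σ.subtypeEquiv (fun i => by rw [hσ]; rfl)
    omega
  have hlamnn : ∀ i, 0 ≤ lam i := by
    intro i
    rw [hσ]
    exact hR.eigenvalues_nonneg _
  have hzero : ∀ i : Fin m, lam (Fin.castLE hmn i) = 0 := by
    intro i
    set k : Fin n := Fin.castLE hmn i with hk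
    by_contra hne
    -- then all zeros of lam are < k
    have hlt : ∀ j : Fin n, lam j = 0 → j < k := by
      intro j hj
      by_contra hjk
      push_neg at hjk
      exact hne (le_antisymm (hj ▸ hmono hjk) (hlamnn k))
    have hsub : (univ.filter (fun j : Fin n => lam j = 0)) ⊆ Finset.Iio k := by
      intro j hj
      simp only [Finset.mem_filter] at hj
      exact Finset.mem_Iio.mpr (hlt j hj.2)
    have hcardZ : Fintype.card {i : Fin n // lam i = 0}
        = (univ.filter (fun j : Fin n => lam j = 0)).card := Fintype.card_subtype _
    have h2 := Finset.card_le_card hsub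
    rw [Fin.card_Iio] at h2
    have h3 : (k : ℕ) < m := i.2
    omega
  exact Finset.sum_eq_zero fun i _ => hzero i
end
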